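/- Let P be a poset. Then P is R*-doubly continuous if and only if P is (Dir Filt)-continuous, i.e., P is 𝓜𝓝-continuous for 𝓜 the collection of all directed subsets of P and 𝓝 the collection of all filtered subsets of P. -/

import Mathlib

universe u

/-- A directed preordered index for a net. -/
structure IsDirNet {I : Type u} (r : I → I → Prop) : Prop where
  refl : ∀ i, r i i
  trans : ∀ {i j k : I}, r i j → r j k → r i k
  nonempty : Nonempty I
  directed : ∀ i j, ∃ k, r i k ∧ r j k

/-- A minimal subset selection on a poset `P`. -/
def MinSel {P : Type u} [PartialOrder P] (M : Set (Set P)) : Prop :=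
  (∅ : Set P) ∉ M ∧ ∀ x : P, {x} ∈ M

/-- The net `f : I → P` `𝓜𝓝`-converges to `x`. -/
def MNConv {P : Type u} [PartialOrder P] (M N : Set (Set P))
    {I : Type u} (r : I → I → Prop) (f : I → P) (x : P) : Prop :=
  ∃ A S : Set P, A ∈ M ∧ S ∈ N ∧ IsLUB A x ∧ IsGLB S x ∧
    ∀ a ∈ A, ∀ s ∈ S, ∃ i₀, ∀ i, r i₀ i → a ≤ f i ∧ f i ≤ s

/-- The topology `τ_𝓜𝓝` induced by `𝓜𝓝`-convergence. -/
def mnTop {P : Type u} [PartialOrder P] (M N : Set (Set P)) : Set (Set P) :=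
  {U | ∀ (I : Type u) (r : I → I → Prop) (f : I → P) (x : P),
      IsDirNet r → MNConv M N r f x → x ∈ U → ∃ i₀, ∀ i, r i₀ i → f i ∈ U}

/-- The `𝓜𝓝`-convergence structure is topological. -/
def MNTopological {P : Type u} [PartialOrder P] (M N : Set (Set P)) : Prop :=
  ∀ (I : Type u) (r : I → I → Prop) (f : I → P) (x : P), IsDirNet r →
    (∀ U ∈ mnTop M N, x ∈ U → ∃ i₀, ∀ i, r i₀ i → f i ∈ U) →
    MNConv M N r f x

/-- The relation `x ≪_𝓜𝓝 y`. -/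
def wbMN {P : Type u} [PartialOrder P] (M N : Set (Set P)) (x y : P) : Prop :=
  ∀ A S : Set P, A ∈ M → S ∈ N → IsLUB A y → IsGLB S y →
    ∃ B T : Set P, B.Nonempty ∧ B.Finite ∧ B ⊆ A ∧ T.Nonempty ∧ T.Finite ∧ T ⊆ S ∧
      upperBounds B ∩ lowerBounds T ⊆ Set.Ici x

/-- The relation `y ◁_𝓜𝓝 z`. -/
def triMN {P : Type u} [PartialOrder P] (M N : Set (Set P)) (y z : P) : Prop :=
  ∀ A S : Set P, A ∈ M → S ∈ N → IsLUB A y → IsGLB S y →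
    ∃ B T : Set P, B.Nonempty ∧ B.Finite ∧ B ⊆ A ∧ T.Nonempty ∧ T.Finite ∧ T ⊆ S ∧
      upperBounds B ∩ lowerBounds T ⊆ Set.Iic z

/-- `𝓜𝓝`-continuity of the poset `P`. -/
def MNCont {P : Type u} [PartialOrder P] (M N : Set (Set P)) : Prop :=
  ∀ x y : P,
    (∃ A S : Set P, A ∈ M ∧ S ∈ N ∧ A ⊆ {w | wbMN M N w x} ∧
      S ⊆ {w | triMN M N x w} ∧ IsLUB A x ∧ IsGLB S x) ∧
    ({w | wbMN M N x w} ∩ {w | triMN M N w y}) ∈ mnTop M N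

lemma exists_rel_of_finite {P : Type u} (r : P → P → Prop) (hr : Transitive r)
    {A : Set P} (hA : DirectedOn r A) (hAne : A.Nonempty)
    {B : Set P} (hB : B.Finite) (hBA : B ⊆ A) : ∃ d ∈ A, ∀ b ∈ B, r b d := by
  have key : ∀ B : Set P, B.Finite → B ⊆ A → ∃ d ∈ A, ∀ b ∈ B, r b d := by
    intro B hB
    refine Set.Finite.induction_on (motive := fun B _ => B ⊆ A → ∃ d ∈ A, ∀ b ∈ B, r b d) B hB
      (fun _ => hAne.imp fun d hd => ⟨hd, by simp⟩) ?_
    intro a s _ _ ih hsub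
    obtain ⟨d, hdA, hd⟩ := ih (fun x hx => hsub (Set.mem_insert_of_mem _ hx))
    obtain ⟨e, heA, hae, hde⟩ := hA _ (hsub (Set.mem_insert _ _)) d hdA
    refine ⟨e, heA, ?_⟩
    intro b hb
    rcases Set.mem_insert_iff.1 hb with h | h
    · exact h ▸ hae
    · exact hr (hd b h) hde
  exact key B hB hBA

/-- `P` is R*-doubly continuous iff `P` is (Dir Filt)-continuous. -/
theorem stmt_18 {P : Type u} [PartialOrder P] :
    let Dir : Set (Set P) := {D | D.Nonempty ∧ DirectedOn (· ≤ ·) D}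
    let Filt : Set (Set P) := {F | F.Nonempty ∧ DirectedOn (· ≥ ·) F}
    ((∀ x : P,
        ({w | wbMN Dir Filt w x}).Nonempty ∧
          DirectedOn (· ≤ ·) {w | wbMN Dir Filt w x} ∧
          IsLUB {w | wbMN Dir Filt w x} x ∧
        ({w | triMN Dir Filt x w}).Nonempty ∧
          DirectedOn (· ≥ ·) {w | triMN Dir Filt x w} ∧
          IsGLB {w | triMN Dir Filt x w} x) ∧
      (∀ x y z : P, wbMN Dir Filt y x → triMN Dir Filt x z →
        ∃ a s : P, wbMN Dir Filt a x ∧ triMN Dir Filt x s ∧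
          Set.Ici a ∩ Set.Iic s ⊆ {p | wbMN Dir Filt y p} ∩ {p | triMN Dir Filt p z})
      ↔ MNCont Dir Filt) := by
  intro Dir Filt
  have htransle : Transitive ((· ≤ ·) : P → P → Prop) := fun _ _ _ h h' => h.trans h'
  have htransge : Transitive ((· ≥ ·) : P → P → Prop) := fun _ _ _ h h' => h'.trans h
  constructor
  · -- R* double continuity → MN-continuity
    rintro ⟨hR1, hR2⟩
    intro x y
    obtain ⟨hwne, hwdir, hwlub, htne, htdir, htglb⟩ := hR1 x
    refine ⟨⟨{w | wbMN Dir Filt w x}, {w | triMN Dir Filt x w},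
      ⟨hwne, hwdir⟩, ⟨htne, htdir⟩, subset_rfl, subset_rfl, hwlub, htglb⟩, ?_⟩
    -- openness (MN2)
    intro I r f p hnet hconv hpU
    obtain ⟨A, S, hADir, hSFilt, hAlub, hSglb, hev⟩ := hconv
    obtain ⟨a, s, hax, hxs, hsub⟩ := hR2 p x y hpU.1 hpU.2
    obtain ⟨B₁, T₁, hB₁ne, hB₁fin, hB₁A, hT₁ne, hT₁fin, hT₁S, hBT₁⟩ :=
      hax A S hADir hSFilt hAlub hSglb
    obtain ⟨B₂, T₂, hB₂ne, hB₂fin, hB₂A, hT₂ne, hT₂fin, hT₂S, hBT₂⟩ :=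
      hxs A S hADir hSFilt hAlub hSglb
    obtain ⟨d, hdA, hd⟩ := exists_rel_of_finite (· ≤ ·) htransle hADir.2 hADir.1
      (hB₁fin.union hB₂fin) (Set.union_subset hB₁A hB₂A)
    obtain ⟨e, heS, he⟩ := exists_rel_of_finite (· ≥ ·) htransge hSFilt.2 hSFilt.1
      (hT₁fin.union hT₂fin) (Set.union_subset hT₁S hT₂S)
    obtain ⟨i₀, hi₀⟩ := hev d hdA e heS
    refine ⟨i₀, fun i hi => ?_⟩
    obtain ⟨hdf, hfe⟩ := hi₀ i hi
    have hub₁ : f i ∈ upperBounds B₁ := fun b hb => (hd b (Or.inl hb)).trans hdf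
    have hub₂ : f i ∈ upperBounds B₂ := fun b hb => (hd b (Or.inr hb)).trans hdf
    have hlb₁ : f i ∈ lowerBounds T₁ := fun t ht => hfe.trans (he t (Or.inl ht))
    have hlb₂ : f i ∈ lowerBounds T₂ := fun t ht => hfe.trans (he t (Or.inr ht))
    exact hsub ⟨hBT₁ ⟨hub₁, hlb₁⟩, hBT₂ ⟨hub₂, hlb₂⟩⟩
  · -- MN-continuity → R* double continuity
    intro h
    have hR1 : ∀ x : P,
        ({w | wbMN Dir Filt w x}).Nonempty ∧
          DirectedOn (· ≤ ·) {w | wbMN Dir Filt w x} ∧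
          IsLUB {w | wbMN Dir Filt w x} x ∧
        ({w | triMN Dir Filt x w}).Nonempty ∧
          DirectedOn (· ≥ ·) {w | triMN Dir Filt x w} ∧
          IsGLB {w | triMN Dir Filt x w} x := by
      intro x
      obtain ⟨⟨A, S, hADir, hSFilt, hAsub, hSsub, hAlub, hSglb⟩, _⟩ := h x x
      -- x is an upper bound of every B ⊆ A and lower bound of every T ⊆ S
      have hxub : ∀ {B : Set P}, B ⊆ A → x ∈ upperBounds B :=
        fun hBA b hb => hAlub.1 (hBA hb)
      have hxlb : ∀ {T : Set P}, T ⊆ S → x ∈ lowerBounds T :=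
        fun hTS t ht => hSglb.1 (hTS ht)
      have hwle : ∀ w, wbMN Dir Filt w x → w ≤ x := by
        intro w hw
        obtain ⟨B, T, _, _, hBA, _, _, hTS, hBT⟩ := hw A S hADir hSFilt hAlub hSglb
        exact hBT ⟨hxub hBA, hxlb hTS⟩
      have htge : ∀ w, triMN Dir Filt x w → x ≤ w := by
        intro w hw
        obtain ⟨B, T, _, _, hBA, _, _, hTS, hBT⟩ := hw A S hADir hSFilt hAlub hSglb
        exact hBT ⟨hxub hBA, hxlb hTS⟩
      refine ⟨hADir.1.mono hAsub, ?_, ?_, hSFilt.1.mono hSsub, ?_, ?_⟩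
      · -- directedness of the way-below set
        intro p hp q hq
        obtain ⟨B₁, T₁, _, hB₁fin, hB₁A, _, _, hT₁S, hBT₁⟩ :=
          hp A S hADir hSFilt hAlub hSglb
        obtain ⟨B₂, T₂, _, hB₂fin, hB₂A, _, _, hT₂S, hBT₂⟩ :=
          hq A S hADir hSFilt hAlub hSglb
        obtain ⟨d, hdA, hd⟩ := exists_rel_of_finite (· ≤ ·) htransle hADir.2 hADir.1
          (hB₁fin.union hB₂fin) (Set.union_subset hB₁A hB₂A)
        have hdx : d ≤ x := hAlub.1 hdA
        have hdlb : ∀ {T : Set P}, T ⊆ S → d ∈ lowerBounds T :=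
          fun hTS t ht => hdx.trans (hSglb.1 (hTS ht))
        refine ⟨d, hAsub hdA, ?_, ?_⟩
        · exact hBT₁ ⟨fun b hb => hd b (Or.inl hb), hdlb hT₁S⟩
        · exact hBT₂ ⟨fun b hb => hd b (Or.inr hb), hdlb hT₂S⟩
      · -- IsLUB of the way-below set
        exact ⟨fun w hw => hwle w hw, fun u hu => hAlub.2 fun a ha => hu (hAsub ha)⟩
      · -- filteredness of the way-above set
        intro p hp q hq
        obtain ⟨B₁, T₁, _, _, hB₁A, _, hT₁fin, hT₁S, hBT₁⟩ :=
          hp A S hADir hSFilt hAlub hSglb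
        obtain ⟨B₂, T₂, _, _, hB₂A, _, hT₂fin, hT₂S, hBT₂⟩ :=
          hq A S hADir hSFilt hAlub hSglb
        obtain ⟨e, heS, he⟩ := exists_rel_of_finite (· ≥ ·) htransge hSFilt.2 hSFilt.1
          (hT₁fin.union hT₂fin) (Set.union_subset hT₁S hT₂S)
        have hxe : x ≤ e := hSglb.1 heS
        have heub : ∀ {B : Set P}, B ⊆ A → e ∈ upperBounds B :=
          fun hBA b hb => (hAlub.1 (hBA hb)).trans hxe
        refine ⟨e, hSsub heS, ?_, ?_⟩
        · exact hBT₁ ⟨heub hB₁A, fun t ht => he t (Or.inl ht)⟩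
        · exact hBT₂ ⟨heub hB₂A, fun t ht => he t (Or.inr ht)⟩
      · -- IsGLB of the way-above set
        exact ⟨fun w hw => htge w hw, fun u hu => hSglb.2 fun s hs => hu (hSsub hs)⟩
    refine ⟨hR1, ?_⟩
    -- the interpolation property (R2)
    intro x y z hyx hxz
    by_contra hcon
    push_neg at hcon
    obtain ⟨hwne, hwdir, hwlub, htne, htdir, htglb⟩ := hR1 x
    set U : Set P := {p | wbMN Dir Filt y p} ∩ {p | triMN Dir Filt p z} with hU
    have hUopen : U ∈ mnTop Dir Filt := (h y z).2
    have hxU : x ∈ U := ⟨hyx, hxz⟩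
    -- for each pair (a,s) pick a witness outside U
    have pick : ∀ q : P × P, wbMN Dir Filt q.1 x → triMN Dir Filt x q.2 →
        ∃ p : P, q.1 ≤ p ∧ p ≤ q.2 ∧ p ∉ U := by
      intro q ha hs
      obtain ⟨p, hp, hpU⟩ := Set.not_subset.1 (hcon q.1 q.2 ha hs)
      exact ⟨p, hp.1, hp.2, hpU⟩
    let I : Type u := {q : P × P // wbMN Dir Filt q.1 x ∧ triMN Dir Filt x q.2}
    let r : I → I → Prop := fun i j => i.1.1 ≤ j.1.1 ∧ j.1.2 ≤ i.1.2
    let f : I → P := fun i => (pick i.1 i.2.1 i.2.2).choose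
    have hf : ∀ i : I, i.1.1 ≤ f i ∧ f i ≤ i.1.2 ∧ f i ∉ U := fun i =>
      ⟨(pick i.1 i.2.1 i.2.2).choose_spec.1, (pick i.1 i.2.1 i.2.2).choose_spec.2.1,
        (pick i.1 i.2.1 i.2.2).choose_spec.2.2⟩
    have hnet : IsDirNet r := by
      refine ⟨fun i => ⟨le_refl _, le_refl _⟩,
        fun hij hjk => ⟨hij.1.trans hjk.1, hjk.2.trans hij.2⟩, ?_, ?_⟩
      · obtain ⟨a, ha⟩ := hwne
        obtain ⟨s, hs⟩ := htne
        exact ⟨⟨(a, s), ha, hs⟩⟩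
      · intro i j
        obtain ⟨a, ha, hia, hja⟩ := hwdir i.1.1 i.2.1 j.1.1 j.2.1
        obtain ⟨s, hs, his, hjs⟩ := htdir i.1.2 i.2.2 j.1.2 j.2.2
        exact ⟨⟨(a, s), ha, hs⟩, ⟨hia, his⟩, ⟨hja, hjs⟩⟩
    have hconv : MNConv Dir Filt r f x := by
      refine ⟨{w | wbMN Dir Filt w x}, {w | triMN Dir Filt x w},
        ⟨hwne, hwdir⟩, ⟨htne, htdir⟩, hwlub, htglb, ?_⟩
      intro a ha s hs
      refine ⟨⟨(a, s), ha, hs⟩, fun i hi => ?_⟩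
      exact ⟨hi.1.trans (hf i).1, (hf i).2.1.trans hi.2⟩
    obtain ⟨i₀, hi₀⟩ := hUopen I r f x hnet hconv hxU
    exact (hf i₀).2.2 (hi₀ i₀ (hnet.refl i₀))
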